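/- Embedding of the partial-correctness Hoare logic: for any While statement s and state predicates U and Z, if ⊢p {U} s {Z} is derivable in the state-based partial-correctness Hoare logic, then ⊢{U} s {True ** [Z]} is derivable in the trace-based Hoare logic. -/
import Mathlib


namespace WhileTrace

/-- Program variables. -/
abbrev Var := ℕ
/-- States assign integer values to variables. -/
abbrev State := Var → ℤ
/-- Arithmetic expressions, modelled by their integer value in each state. -/
abbrev Expr := State → ℤ

/-- State update `σ[x ↦ v]`. -/
def update (σ : State) (x : Var) (v : ℤ) : State := Function.update σ x v

/-- Reading an expression as a boolean: `σ ⊨ e`. -/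
def istrue (e : Expr) (σ : State) : Prop := e σ ≠ 0

/-- Traces: nonempty, possibly infinite sequences of states
(a head state together with a possibly infinite sequence of further states). -/
def Trace : Type := State × Stream'.Seq State

/-- The singleton trace `⟨σ⟩`. -/
def Trace.single (σ : State) : Trace := (σ, Stream'.Seq.nil)

/-- The cons trace `σ :: τ`. -/
def Trace.cons (σ : State) (τ : Trace) : Trace := (σ, Stream'.Seq.cons τ.1 τ.2)

/-- The first state of a trace. -/
def Trace.hd (τ : Trace) : State := τ.1

/-- Bisimilarity of traces `τ ≈ τ'`, as a greatest fixed point: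
there is a relation `R` relating the two traces that is consistent with the
coinductive rules `⟨σ⟩ ≈ ⟨σ⟩` and `σ::τ ≈ σ::τ'` whenever `τ ≈ τ'`. -/
def Bisim (τ τ' : Trace) : Prop :=
  ∃ R : Trace → Trace → Prop, R τ τ' ∧
    ∀ a b, R a b →
      (∃ σ, a = Trace.single σ ∧ b = Trace.single σ) ∨
      (∃ σ a' b', a = Trace.cons σ a' ∧ b = Trace.cons σ b' ∧ R a' b')

/-- Finiteness `τ ↓ σ` : `τ` is finite with last state `σ` (inductive). -/
inductive Converges : Trace → State → Prop
  | single (σ : State) : Converges (Trace.single σ) σ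
  | cons (σ' : State) {τ : Trace} {σ : State} :
      Converges τ σ → Converges (Trace.cons σ' τ) σ

/-- Infiniteness of a trace (coinductive, as a greatest fixed point). -/
def InfiniteT (τ : Trace) : Prop :=
  ∃ P : Trace → Prop, P τ ∧ ∀ a, P a → ∃ σ a', a = Trace.cons σ a' ∧ P a'

/-- Statements of the While language. -/
inductive Stmt : Type
  | assign (x : Var) (e : Expr)
  | skip
  | seq (s₀ s₁ : Stmt)
  | ifte (e : Expr) (st sf : Stmt)
  | whileDo (e : Expr) (st : Stmt)

/-- A pair of relations `(E, ES)` is consistent with the rules of evaluation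
and extended evaluation: every claimed evaluation is backed by one of the
coinductive rules, with premises again in `(E, ES)`. -/
def EvalConsistent (E : Stmt → State → Trace → Prop)
    (ES : Stmt → Trace → Trace → Prop) : Prop :=
  (∀ x e σ τ, E (.assign x e) σ τ →
      τ = Trace.cons σ (Trace.single (update σ x (e σ)))) ∧
  (∀ σ τ, E .skip σ τ → τ = Trace.single σ) ∧
  (∀ s₀ s₁ σ τ', E (.seq s₀ s₁) σ τ' → ∃ τ, E s₀ σ τ ∧ ES s₁ τ τ') ∧
  (∀ e st sf σ τ, E (.ifte e st sf) σ τ →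
      (istrue e σ ∧ ES st (Trace.cons σ (Trace.single σ)) τ) ∨
      (¬ istrue e σ ∧ ES sf (Trace.cons σ (Trace.single σ)) τ)) ∧
  (∀ e st σ τ', E (.whileDo e st) σ τ' →
      (istrue e σ ∧ ∃ τ, ES st (Trace.cons σ (Trace.single σ)) τ ∧
        ES (.whileDo e st) τ τ') ∨
      (¬ istrue e σ ∧ τ' = Trace.cons σ (Trace.single σ))) ∧
  (∀ s τ τ', ES s τ τ' →
      (∃ σ, τ = Trace.single σ ∧ E s σ τ') ∨
      (∃ σ τ₀ τ₀', τ = Trace.cons σ τ₀ ∧ τ' = Trace.cons σ τ₀' ∧ ES s τ₀ τ₀'))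

/-- Evaluation `(s,σ) ⇒ τ` : greatest fixed point of the mutual coinductive rules. -/
def Exec (s : Stmt) (σ : State) (τ : Trace) : Prop :=
  ∃ E ES, EvalConsistent E ES ∧ E s σ τ

/-- Extended evaluation `(s,τ) ⇒* τ'`. -/
def ExecSeq (s : Stmt) (τ τ' : Trace) : Prop :=
  ∃ E ES, EvalConsistent E ES ∧ ES s τ τ'

/-- The standard inductive state-based big-step semantics `(s,σ) ⇓ σ'`. -/
inductive BigStep : Stmt → State → State → Prop
  | assign (x : Var) (e : Expr) (σ : State) :
      BigStep (.assign x e) σ (update σ x (e σ))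
  | skip (σ : State) : BigStep .skip σ σ
  | seq {s₀ s₁ : Stmt} {σ σ' σ'' : State} :
      BigStep s₀ σ σ' → BigStep s₁ σ' σ'' → BigStep (.seq s₀ s₁) σ σ''
  | ifTrue {e : Expr} {st sf : Stmt} {σ σ' : State} :
      istrue e σ → BigStep st σ σ' → BigStep (.ifte e st sf) σ σ'
  | ifFalse {e : Expr} {st sf : Stmt} {σ σ' : State} :
      ¬ istrue e σ → BigStep sf σ σ' → BigStep (.ifte e st sf) σ σ'
  | whileTrue {e : Expr} {st : Stmt} {σ σ' σ'' : State} :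
      istrue e σ → BigStep st σ σ' → BigStep (.whileDo e st) σ' σ'' →
      BigStep (.whileDo e st) σ σ''
  | whileFalse {e : Expr} {st : Stmt} {σ : State} :
      ¬ istrue e σ → BigStep (.whileDo e st) σ σ

/-- State predicates. -/
abbrev StatePred := State → Prop
/-- Trace predicates. -/
abbrev TracePred := Trace → Prop

/-- A setoid trace predicate respects bisimilarity. -/
def IsSetoidPred (P : TracePred) : Prop := ∀ τ τ', P τ → Bisim τ τ' → P τ'

/-- The singleton predicate `[U]`. -/
def Sglt (U : StatePred) : TracePred :=
  fun τ => ∃ σ, U σ ∧ τ = Trace.single σ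

/-- The doubleton predicate `⟨U⟩`. -/
def Dup (U : StatePred) : TracePred :=
  fun τ => ∃ σ, U σ ∧ τ = Trace.cons σ (Trace.single σ)

/-- The update predicate `U[x ↦ e]`. -/
def UpdPred (U : StatePred) (x : Var) (e : Expr) : TracePred :=
  fun τ => ∃ σ, U σ ∧ τ = Trace.cons σ (Trace.single (update σ x (e σ)))

/-- `Q follows τ in τ'` (coinductive, as a greatest fixed point). -/
def Follows (Q : TracePred) (τ τ' : Trace) : Prop :=
  ∃ R : Trace → Trace → Prop, R τ τ' ∧
    ∀ a b, R a b →
      (∃ σ, a = Trace.single σ ∧ b.hd = σ ∧ Q b) ∨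
      (∃ σ a' b', a = Trace.cons σ a' ∧ b = Trace.cons σ b' ∧ R a' b')

/-- The chop `P ** Q`. -/
def Chop (P Q : TracePred) : TracePred :=
  fun τ' => ∃ τ, P τ ∧ Follows Q τ τ'

/-- The iteration `P*` (coinductive, as a greatest fixed point). -/
def Iter (P : TracePred) : TracePred := fun τ =>
  ∃ X : TracePred, X τ ∧
    ∀ a, X a → Sglt (fun _ => True) a ∨ ∃ τ₀, P τ₀ ∧ Follows X τ₀ a

/-- `Last P` : states that are the last state of some finite trace satisfying `P`. -/
def Last (P : TracePred) : StatePred := fun σ => ∃ τ, P τ ∧ Converges τ σ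

/-- The trace predicate `finite`. -/
def FiniteT : TracePred := fun τ => ∃ σ, Converges τ σ

/-- Derivability `⊢ {U} s {P}` in the trace-based Hoare logic. -/
inductive THoare : StatePred → Stmt → TracePred → Prop
  | assign (U : StatePred) (x : Var) (e : Expr) :
      THoare U (.assign x e) (UpdPred U x e)
  | skip (U : StatePred) : THoare U .skip (Sglt U)
  | seq {U V : StatePred} {s₀ s₁ : Stmt} {P Q : TracePred} :
      THoare U s₀ (Chop P (Sglt V)) → THoare V s₁ Q →
      THoare U (.seq s₀ s₁) (Chop P Q)
  | ifte {U : StatePred} {e : Expr} {st sf : Stmt} {P : TracePred} :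
      THoare (fun σ => istrue e σ ∧ U σ) st P →
      THoare (fun σ => ¬ istrue e σ ∧ U σ) sf P →
      THoare U (.ifte e st sf) (Chop (Dup U) P)
  | whileDo {U I : StatePred} {e : Expr} {st : Stmt} {P : TracePred} :
      (∀ σ, U σ → I σ) →
      THoare (fun σ => istrue e σ ∧ I σ) st (Chop P (Sglt I)) →
      THoare U (.whileDo e st)
        (Chop (Dup U)
          (Chop (Iter (Chop P (Dup I))) (Sglt (fun σ => ¬ istrue e σ))))
  | conseq {U U' : StatePred} {s : Stmt} {P P' : TracePred} :
      (∀ σ, U σ → U' σ) → THoare U' s P' → (∀ τ, P' τ → P τ) →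
      THoare U s P
  | exist {Z : Type} {U : Z → StatePred} {s : Stmt} {P : Z → TracePred} :
      (∀ z, THoare (U z) s (P z)) →
      THoare (fun σ => ∃ z, U z σ) s (fun τ => ∃ z, P z τ)

/-- Derivability `⊢p {U} s {Z}` in the state-based partial-correctness Hoare logic. -/
inductive PHoare : StatePred → Stmt → StatePred → Prop
  | assign (Z : StatePred) (x : Var) (e : Expr) :
      PHoare (fun σ => Z (update σ x (e σ))) (.assign x e) Z
  | skip (U : StatePred) : PHoare U .skip U
  | seq {U V Z : StatePred} {s₀ s₁ : Stmt} :
      PHoare U s₀ V → PHoare V s₁ Z → PHoare U (.seq s₀ s₁) Z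
  | ifte {U Z : StatePred} {e : Expr} {st sf : Stmt} :
      PHoare (fun σ => istrue e σ ∧ U σ) st Z →
      PHoare (fun σ => ¬ istrue e σ ∧ U σ) sf Z →
      PHoare U (.ifte e st sf) Z
  | whileDo {I : StatePred} {e : Expr} {st : Stmt} :
      PHoare (fun σ => istrue e σ ∧ I σ) st I →
      PHoare I (.whileDo e st) (fun σ => I σ ∧ ¬ istrue e σ)
  | exist {Z : Type} {U V : Z → StatePred} {s : Stmt} :
      (∀ z, PHoare (U z) s (V z)) →
      PHoare (fun σ => ∃ z, U z σ) s (fun σ => ∃ z, V z σ)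
  | conseq {U U' Z Z' : StatePred} {s : Stmt} :
      (∀ σ, U σ → U' σ) → PHoare U' s Z' → (∀ σ, Z' σ → Z σ) →
      PHoare U s Z

/-- Derivability `⊢t {U} s {Z}` in the state-based total-correctness Hoare
logic, with the `while-fun` rule. -/
inductive TotHoare : StatePred → Stmt → StatePred → Prop
  | assign (Z : StatePred) (x : Var) (e : Expr) :
      TotHoare (fun σ => Z (update σ x (e σ))) (.assign x e) Z
  | skip (U : StatePred) : TotHoare U .skip U
  | seq {U V Z : StatePred} {s₀ s₁ : Stmt} :
      TotHoare U s₀ V → TotHoare V s₁ Z → TotHoare U (.seq s₀ s₁) Z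
  | ifte {U Z : StatePred} {e : Expr} {st sf : Stmt} :
      TotHoare (fun σ => istrue e σ ∧ U σ) st Z →
      TotHoare (fun σ => ¬ istrue e σ ∧ U σ) sf Z →
      TotHoare U (.ifte e st sf) Z
  | whileFun {I : StatePred} {e : Expr} {st : Stmt} (t : State → ℕ) (m : ℕ) :
      (∀ n : ℕ, TotHoare (fun σ => istrue e σ ∧ I σ ∧ t σ = n) st
        (fun σ => I σ ∧ t σ < n)) →
      TotHoare (fun σ => I σ ∧ t σ = m) (.whileDo e st)
        (fun σ => I σ ∧ t σ ≤ m ∧ ¬ istrue e σ)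
  | exist {Z : Type} {U V : Z → StatePred} {s : Stmt} :
      (∀ z, TotHoare (U z) s (V z)) →
      TotHoare (fun σ => ∃ z, U z σ) s (fun σ => ∃ z, V z σ)
  | conseq {U U' Z Z' : StatePred} {s : Stmt} :
      (∀ σ, U σ → U' σ) → TotHoare U' s Z' → (∀ σ, Z' σ → Z σ) →
      TotHoare U s Z

/-- Finiteness with explicit length. -/
inductive ConvN : ℕ → Trace → State → Prop
  | zero (σ : State) : ConvN 0 (Trace.single σ) σ
  | succ (σ' : State) {n : ℕ} {τ : Trace} {σ : State} :
      ConvN n τ σ → ConvN (n + 1) (Trace.cons σ' τ) σ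

lemma single_ne_cons (σ σ' : State) (τ : Trace) :
    Trace.single σ ≠ Trace.cons σ' τ := by
  intro h
  have := congrArg (fun t : Trace => (t.2).get? 0) h
  simp [Trace.single, Trace.cons, Stream'.Seq.get?_nil, Stream'.Seq.get?_cons_zero] at this

lemma single_inj {σ σ' : State} (h : Trace.single σ = Trace.single σ') : σ = σ' :=
  congrArg Prod.fst h

lemma cons_inj {σ σ' : State} {a b : Trace}
    (h : Trace.cons σ a = Trace.cons σ' b) : σ = σ' ∧ a = b := by
  have h1 : σ = σ' := congrArg Prod.fst h
  have h2 : Stream'.Seq.cons a.1 a.2 = Stream'.Seq.cons b.1 b.2 := congrArg Prod.snd h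
  obtain ⟨h3, h4⟩ := Stream'.Seq.cons_injective2 h2
  exact ⟨h1, Prod.ext h3 h4⟩

lemma hd_single (σ : State) : (Trace.single σ).hd = σ := rfl
lemma hd_cons (σ : State) (τ : Trace) : (Trace.cons σ τ).hd = σ := rfl

lemma follows_unfold {Q : TracePred} {a b : Trace} (h : Follows Q a b) :
    (∃ σ, a = Trace.single σ ∧ b.hd = σ ∧ Q b) ∨
    (∃ σ a' b', a = Trace.cons σ a' ∧ b = Trace.cons σ b' ∧ Follows Q a' b') := by
  obtain ⟨R, hab, hR⟩ := h
  rcases hR a b hab with h1 | ⟨σ, a', b', h2, h3, h4⟩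
  · exact Or.inl h1
  · exact Or.inr ⟨σ, a', b', h2, h3, R, h4, hR⟩

lemma follows_cons {Q : TracePred} (σ : State) {a b : Trace} (h : Follows Q a b) :
    Follows Q (Trace.cons σ a) (Trace.cons σ b) := by
  obtain ⟨R, hab, hR⟩ := h
  refine ⟨fun x y => R x y ∨ (x = Trace.cons σ a ∧ y = Trace.cons σ b),
    Or.inr ⟨rfl, rfl⟩, ?_⟩
  rintro x y (hxy | ⟨rfl, rfl⟩)
  · rcases hR x y hxy with h1 | ⟨σ₂, a', b', h2, h3, h4⟩
    · exact Or.inl h1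
    · exact Or.inr ⟨σ₂, a', b', h2, h3, Or.inl h4⟩
  · exact Or.inr ⟨σ, a, b, rfl, rfl, Or.inl hab⟩

lemma follows_single {Q : TracePred} {σ : State} {b : Trace}
    (hb : Q b) (hhd : b.hd = σ) : Follows Q (Trace.single σ) b := by
  refine ⟨fun x y => x = Trace.single σ ∧ y = b, ⟨rfl, rfl⟩, ?_⟩
  rintro x y ⟨rfl, rfl⟩
  exact Or.inl ⟨σ, rfl, hhd, hb⟩

lemma follows_mono {Q Q' : TracePred} {a b : Trace}
    (h : Follows Q a b) (hQ : ∀ τ, Q τ → Q' τ) : Follows Q' a b := by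
  obtain ⟨R, hab, hR⟩ := h
  refine ⟨R, hab, fun x y hxy => ?_⟩
  rcases hR x y hxy with ⟨σ, h1, h2, h3⟩ | h'
  · exact Or.inl ⟨σ, h1, h2, hQ _ h3⟩
  · exact Or.inr h'

lemma follows_hd {Q : TracePred} {a b : Trace} (h : Follows Q a b) : a.hd = b.hd := by
  rcases follows_unfold h with ⟨σ, rfl, h2, _⟩ | ⟨σ, a', b', rfl, rfl, _⟩
  · exact h2.symm
  · rfl

lemma infinite_unfold {a : Trace} (h : InfiniteT a) :
    ∃ σ a', a = Trace.cons σ a' ∧ InfiniteT a' := by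
  obtain ⟨P, ha, hP⟩ := h
  obtain ⟨σ, a', h1, h2⟩ := hP a ha
  exact ⟨σ, a', h1, P, h2, hP⟩

lemma follows_infinite {Q : TracePred} {a b : Trace}
    (ha : InfiniteT a) (h : Follows Q a b) : InfiniteT b := by
  refine ⟨fun y => ∃ x, InfiniteT x ∧ Follows Q x y, ⟨a, ha, h⟩, ?_⟩
  rintro y ⟨x, hx, hxy⟩
  obtain ⟨σ, x'', hx1, hx2⟩ := infinite_unfold hx
  rcases follows_unfold hxy with ⟨σ₂, h1, _, _⟩ | ⟨σ₂, x', y', h1, h2, h3⟩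
  · exact absurd (h1.symm.trans hx1) (single_ne_cons _ _ _)
  · obtain ⟨hσ, hx'⟩ := cons_inj (h1.symm.trans hx1)
    exact ⟨σ₂, y', h2, x', hx'.symm ▸ hx2, h3⟩

lemma follows_self_of_infinite {Q : TracePred} {b : Trace} (hb : InfiniteT b) :
    Follows Q b b := by
  refine ⟨fun x y => x = y ∧ InfiniteT x, ⟨rfl, hb⟩, ?_⟩
  rintro x y ⟨rfl, hx⟩
  obtain ⟨σ, x', rfl, hx'⟩ := infinite_unfold hx
  exact Or.inr ⟨σ, x', x', rfl, rfl, rfl, hx'⟩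

lemma follows_of_infinite_left {P Q : TracePred} {a b : Trace}
    (ha : InfiniteT a) (h : Follows P a b) : Follows Q a b := by
  refine ⟨fun x y => InfiniteT x ∧ Follows P x y, ⟨ha, h⟩, ?_⟩
  rintro x y ⟨hx, hxy⟩
  obtain ⟨σ, x'', hx1, hx2⟩ := infinite_unfold hx
  rcases follows_unfold hxy with ⟨σ₂, h1, _, _⟩ | ⟨σ₂, x', y', h1, h2, h3⟩
  · exact absurd (h1.symm.trans hx1) (single_ne_cons _ _ _)
  · obtain ⟨hσ, hx'⟩ := cons_inj (h1.symm.trans hx1)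
    exact Or.inr ⟨σ₂, x', y', h1, h2, hx'.symm ▸ hx2, h3⟩

lemma not_infinite_of_convN : ∀ {n : ℕ} {τ : Trace} {σ : State},
    ConvN n τ σ → ¬ InfiniteT τ := by
  intro n τ σ h
  induction h with
  | zero σ =>
      intro hinf
      obtain ⟨σ', a', h1, _⟩ := infinite_unfold hinf
      exact single_ne_cons _ _ _ h1
  | succ σ' h ih =>
      intro hinf
      obtain ⟨σ₂, a', h1, h2⟩ := infinite_unfold hinf
      obtain ⟨_, ha⟩ := cons_inj h1
      exact ih (ha ▸ h2)

lemma convN_inv {m : ℕ} {τ : Trace} {σ' : State} (h : ConvN m τ σ') :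
    (m = 0 ∧ τ = Trace.single σ') ∨
    ∃ k σ₁ τ₁, m = k + 1 ∧ τ = Trace.cons σ₁ τ₁ ∧ ConvN k τ₁ σ' := by
  cases h with
  | zero => exact Or.inl ⟨rfl, rfl⟩
  | succ σ₁ h => exact Or.inr ⟨_, _, _, rfl, rfl, h⟩

lemma convN_single_inv {m : ℕ} {σ σ' : State} (h : ConvN m (Trace.single σ) σ') :
    m = 0 ∧ σ' = σ := by
  rcases convN_inv h with ⟨h1, h2⟩ | ⟨k, σ₁, τ₁, _, h2, _⟩
  · exact ⟨h1, (single_inj h2).symm⟩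
  · exact absurd h2 (single_ne_cons _ _ _)

lemma convN_cons_inv {m : ℕ} {σ σ' : State} {τ : Trace}
    (h : ConvN m (Trace.cons σ τ) σ') : ∃ k, m = k + 1 ∧ ConvN k τ σ' := by
  rcases convN_inv h with ⟨_, h2⟩ | ⟨k, σ₁, τ₁, h1, h2, h3⟩
  · exact absurd h2.symm (single_ne_cons _ _ _)
  · obtain ⟨_, hτ⟩ := cons_inj h2
    exact ⟨k, h1, hτ ▸ h3⟩

lemma convN_unique : ∀ {n m : ℕ} {τ : Trace} {σ σ' : State},
    ConvN n τ σ → ConvN m τ σ' → n = m ∧ σ = σ' := by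
  intro n m τ σ σ' h
  induction h generalizing m with
  | zero σ =>
      intro h2
      obtain ⟨h3, h4⟩ := convN_single_inv h2
      exact ⟨h3.symm, h4.symm⟩
  | succ σ₁ h ih =>
      intro h2
      obtain ⟨k, rfl, h3⟩ := convN_cons_inv h2
      obtain ⟨h4, h5⟩ := ih h3
      exact ⟨by omega, h5⟩

lemma conv_of_term : ∀ (n : ℕ) (τ : Trace), τ.2.TerminatedAt n → ∃ m σ, ConvN m τ σ := by
  intro n
  induction n with
  | zero =>
      intro τ hn
      have : τ.2 = Stream'.Seq.nil := Stream'.Seq.terminatedAt_zero_iff.mp hn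
      refine ⟨0, τ.1, ?_⟩
      have : τ = Trace.single τ.1 := Prod.ext rfl this
      rw [this]; exact ConvN.zero _
  | succ n ih =>
      intro τ hn
      cases hc : τ.2.get? 0 with
      | none =>
          have : τ.2 = Stream'.Seq.nil := Stream'.Seq.terminatedAt_zero_iff.mp hc
          refine ⟨0, τ.1, ?_⟩
          have : τ = Trace.single τ.1 := Prod.ext rfl this
          rw [this]; exact ConvN.zero _
      | some a =>
          have hd : τ.2.destruct = some (a, τ.2.tail) := by
            unfold Stream'.Seq.destruct
            rw [hc]; rfl
          have heq : τ.2 = Stream'.Seq.cons a τ.2.tail := Stream'.Seq.destruct_eq_cons hd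
          have hτ : τ = Trace.cons τ.1 (a, τ.2.tail) := Prod.ext rfl heq
          have htail : (Stream'.Seq.TerminatedAt ((a, τ.2.tail) : Trace).2 n) := by
            show τ.2.tail.get? n = none
            rw [Stream'.Seq.get?_tail]
            exact hn
          obtain ⟨m, σ, hms⟩ := ih (a, τ.2.tail) htail
          exact ⟨m + 1, σ, hτ ▸ ConvN.succ τ.1 hms⟩

lemma fin_or_inf (τ : Trace) : (∃ n σ, ConvN n τ σ) ∨ InfiniteT τ := by
  by_cases hT : τ.2.Terminates
  · obtain ⟨n, hn⟩ := hT
    exact Or.inl (conv_of_term n τ hn)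
  · right
    refine ⟨fun a => ¬ a.2.Terminates, hT, ?_⟩
    intro a ha
    cases hc : a.2.get? 0 with
    | none => exact absurd ⟨0, hc⟩ ha
    | some x =>
        have hd : a.2.destruct = some (x, a.2.tail) := by
          unfold Stream'.Seq.destruct
          rw [hc]; rfl
        have heq : a.2 = Stream'.Seq.cons x a.2.tail := Stream'.Seq.destruct_eq_cons hd
        refine ⟨a.1, (x, a.2.tail), Prod.ext rfl heq, ?_⟩
        intro ⟨k, hk⟩
        refine ha ⟨k + 1, ?_⟩
        show a.2.get? (k+1) = none
        rw [heq, Stream'.Seq.get?_cons_succ]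
        exact hk

lemma follows_convN {Q : TracePred} : ∀ {n : ℕ} {τp : Trace} {σp : State} {τ' : Trace}
    {k : ℕ} {σ : State}, ConvN n τp σp → Follows Q τp τ' → ConvN k τ' σ →
    ∃ τ₂, Q τ₂ ∧ τ₂.hd = σp ∧ ConvN (k - n) τ₂ σ ∧ n ≤ k := by
  intro n τp σp τ' k σ h
  induction h generalizing τ' k with
  | zero σp =>
      intro hF hk
      rcases follows_unfold hF with ⟨σ₂, h1, h2, h3⟩ | ⟨σ₂, a', b', h1, _, _⟩
      · exact ⟨τ', h3, h2.trans (single_inj h1).symm, by simpa using hk, Nat.zero_le _⟩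
      · exact absurd h1 (single_ne_cons _ _ _)
  | succ σ₁ h ih =>
      intro hF hk
      rcases follows_unfold hF with ⟨σ₂, h1, _, _⟩ | ⟨σ₂, a', b', h1, h2, h3⟩
      · exact absurd h1.symm (single_ne_cons _ _ _)
      · obtain ⟨hσ, ha⟩ := cons_inj h1
        subst h2
        obtain ⟨m, rfl, hm⟩ := convN_cons_inv hk
        obtain ⟨τ₂, hQ, hhd, hcv, hle⟩ := ih (ha ▸ h3) hm
        exact ⟨τ₂, hQ, hhd, by simpa [Nat.succ_sub_succ] using hcv, by omega⟩

lemma convn_follows_self {Q : TracePred} : ∀ {n : ℕ} {τ : Trace} {σ : State},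
    ConvN n τ σ → Q (Trace.single σ) → Follows Q τ τ := by
  intro n τ σ h
  induction h with
  | zero σ => exact fun hQ => follows_single hQ rfl
  | succ σ' h ih => exact fun hQ => follows_cons σ' (ih hQ)

lemma follows_collapse {Q : TracePred} : ∀ {n : ℕ} {τ : Trace} {σ : State} {τ' : Trace},
    ConvN n τ σ → Follows (Chop (fun _ => True) Q) τ τ' → ∃ τ₀, Follows Q τ₀ τ' := by
  intro n τ σ τ' h
  induction h generalizing τ' with
  | zero σ =>
      intro hF
      rcases follows_unfold hF with ⟨σ₂, _, _, ⟨τ₀, _, hf⟩⟩ | ⟨σ₂, a', b', h1, _, _⟩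
      · exact ⟨τ₀, hf⟩
      · exact absurd h1 (single_ne_cons _ _ _)
  | succ σ₁ h ih =>
      intro hF
      rcases follows_unfold hF with ⟨σ₂, h1, _, _⟩ | ⟨σ₂, a', b', h1, rfl, h3⟩
      · exact absurd h1.symm (single_ne_cons _ _ _)
      · obtain ⟨hσ, ha⟩ := cons_inj h1
        obtain ⟨τ₀, hf⟩ := ih (ha ▸ h3)
        exact ⟨Trace.cons σ₂ τ₀, follows_cons σ₂ hf⟩

lemma chop_absorb {Q : TracePred} {τ τ' : Trace}
    (hf : Follows (Chop (fun _ => True) Q) τ τ') : Chop (fun _ => True) Q τ' := by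
  rcases fin_or_inf τ with ⟨n, σ, hc⟩ | hinf
  · obtain ⟨τ₀, h⟩ := follows_collapse hc hf
    exact ⟨τ₀, trivial, h⟩
  · exact ⟨τ, trivial, follows_of_infinite_left hinf hf⟩

lemma iter_last {I : StatePred} : ∀ n : ℕ, ∀ {τ : Trace} {σ₀ : State},
    Iter (Chop (fun _ => True) (Dup I)) τ → ConvN n τ σ₀ → I τ.hd → I σ₀ := by
  intro n
  induction n using Nat.strong_induction_on with
  | _ n ih =>
    intro τ σ₀ hIter hc hhd
    obtain ⟨X, hX, hcons⟩ := hIter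
    rcases hcons τ hX with ⟨σ, _, rfl⟩ | ⟨τp, hS, hFol⟩
    · obtain ⟨_, h2⟩ := convN_single_inv hc
      exact h2 ▸ hhd
    · have hdp : τp.hd = τ.hd := follows_hd hFol
      rcases fin_or_inf τp with ⟨np, σp, hcp⟩ | hinfp
      · -- I σp from hS
        obtain ⟨τq, _, hFq⟩ := hS
        rcases fin_or_inf τq with ⟨nq, σq, hcq⟩ | hinfq
        · obtain ⟨τd, hDup, hhdd, hcd, hleq⟩ := follows_convN hcq hFq hcp
          obtain ⟨σd, hId, rfl⟩ := hDup
          have h1 : ConvN 1 (Trace.cons σd (Trace.single σd)) σd :=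
            ConvN.succ σd (ConvN.zero σd)
          obtain ⟨hn1, hσpd⟩ := convN_unique hcd h1
          have hIσp : I σp := hσpd ▸ hId
          have hnp1 : 1 ≤ np := by omega
          obtain ⟨τ₂, hXτ₂, hhd₂, hcv₂, hle₂⟩ := follows_convN hcp hFol hc
          have hlt : n - np < n := by omega
          exact ih (n - np) hlt ⟨X, hXτ₂, hcons⟩ hcv₂ (hhd₂ ▸ hIσp)
        · exact absurd (follows_infinite hinfq hFq) (not_infinite_of_convN hcp)
      · exact absurd (follows_infinite hinfp hFol) (not_infinite_of_convN hc)

lemma while_claim {I : StatePred} {e : Expr} {b : Trace} (hIb : I b.hd)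
    (hR : Chop (Iter (Chop (fun _ => True) (Dup I))) (Sglt (fun σ => ¬ istrue e σ)) b) :
    ∃ τ₀, Follows (Sglt (fun σ => I σ ∧ ¬ istrue e σ)) τ₀ b := by
  obtain ⟨τ₀, hIter, hFol⟩ := hR
  rcases fin_or_inf b with ⟨k, σf, hck⟩ | hinfb
  · rcases fin_or_inf τ₀ with ⟨n, σ₀, hcn⟩ | hinf₀
    · obtain ⟨τ₂, hSg, hhd₂, hcv₂, _⟩ := follows_convN hcn hFol hck
      obtain ⟨σ₂, hne, rfl⟩ := hSg
      have hσ₂ : σ₂ = σ₀ := hhd₂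
      obtain ⟨_, hσf⟩ := convN_single_inv hcv₂
      have hI₀ : I σ₀ := iter_last n hIter hcn ((follows_hd hFol) ▸ hIb)
      refine ⟨b, convn_follows_self hck ⟨σf, ⟨?_, ?_⟩, rfl⟩⟩
      · rw [hσf, hσ₂]; exact hI₀
      · rw [hσf, hσ₂]; exact hσ₂ ▸ hne
    · exact absurd (follows_infinite hinf₀ hFol) (not_infinite_of_convN hck)
  · exact ⟨b, follows_self_of_infinite hinfb⟩

lemma while_entail {I : StatePred} {e : Expr} {τ' : Trace}
    (h : Chop (Dup I)
      (Chop (Iter (Chop (fun _ => True) (Dup I))) (Sglt (fun σ => ¬ istrue e σ))) τ') :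
    Chop (fun _ => True) (Sglt (fun σ => I σ ∧ ¬ istrue e σ)) τ' := by
  obtain ⟨τ, ⟨σ, hI, rfl⟩, hF⟩ := h
  rcases follows_unfold hF with ⟨σ₂, h1, _, _⟩ | ⟨σ₂, a', b₁, h1, rfl, h3⟩
  · exact absurd h1.symm (single_ne_cons _ _ _)
  · obtain ⟨hσ, ha⟩ := cons_inj h1
    subst hσ
    rcases follows_unfold (ha ▸ h3) with ⟨σ₃, h4, h5, h6⟩ | ⟨σ₃, a'', b'', h4, _, _⟩
    · have hσ₃ : σ₃ = σ := single_inj h4.symm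
      subst hσ₃
      obtain ⟨τ₀, hf⟩ := while_claim (h5 ▸ hI) h6
      exact ⟨Trace.cons σ₃ τ₀, trivial, follows_cons σ₃ hf⟩
    · exact absurd h4 (single_ne_cons _ _ _)

/-- Embedding of the partial-correctness Hoare logic. -/
theorem pHoare_embed (s : Stmt) (U Z : StatePred) (h : PHoare U s Z) :
    THoare U s (Chop (fun _ => True) (Sglt Z)) := by
  induction h with
  | assign Z x e =>
      refine THoare.conseq (fun σ h => h) (THoare.assign _ x e) ?_
      rintro τ ⟨σ, hZ, rfl⟩
      exact ⟨_, trivial, convn_follows_self (ConvN.succ σ (ConvN.zero _)) ⟨_, hZ, rfl⟩⟩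
  | skip U =>
      refine THoare.conseq (fun σ h => h) (THoare.skip U) ?_
      rintro τ ⟨σ, hU, rfl⟩
      exact ⟨_, trivial, convn_follows_self (ConvN.zero σ) ⟨σ, hU, rfl⟩⟩
  | seq h₀ h₁ ih₀ ih₁ =>
      refine THoare.conseq (fun σ h => h) (THoare.seq ih₀ ih₁) ?_
      rintro τ ⟨τ₀, _, hF⟩
      exact chop_absorb hF
  | ifte ht hf iht ihf =>
      refine THoare.conseq (fun σ h => h) (THoare.ifte iht ihf) ?_
      rintro τ ⟨τ₀, _, hF⟩
      exact chop_absorb hF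
  | whileDo hb ih =>
      refine THoare.conseq (fun σ h => h) (THoare.whileDo (fun σ h => h) ih) ?_
      exact fun τ h => while_entail h
  | exist h ih =>
      refine THoare.conseq (fun σ h => h) (THoare.exist ih) ?_
      rintro τ ⟨z, τ₀, _, hF⟩
      exact ⟨τ₀, trivial, follows_mono hF (fun τ h => by
        obtain ⟨σ, hV, he⟩ := h; exact ⟨σ, ⟨z, hV⟩, he⟩)⟩
  | conseq hU h hZ ih =>
      refine THoare.conseq hU ih ?_
      rintro τ ⟨τ₀, _, hF⟩
      exact ⟨τ₀, trivial, follows_mono hF (fun τ h => by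
        obtain ⟨σ, hZ', he⟩ := h; exact ⟨σ, hZ _ hZ', he⟩)⟩

end WhileTrace
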